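/- Let ε > 0 and δ > 0. Define π₀ : ℕ → ℝ by π₀(0) = 0 and π₀(n+1) = min(e^ε·π₀(n) + δ, 1 − e^{−ε}·(1 − π₀(n) − δ), 1). For every n ≥ 1 with π₀(n) ≠ 1, one has π₀(n) − π₀(n−1) ≥ e^{−ε}·δ. Consequently there exists a finite N such that π₀(n) = 1 for all n ≥ N. -/
import Mathlib


open Real

theorem pi_opt_strict_increase_and_reaches_one
    (ε δ : ℝ) (hε : 0 < ε) (hδ : 0 < δ)
    (π₀ : ℕ → ℝ) (h0 : π₀ 0 = 0)
    (hrec : ∀ n, π₀ (n + 1) =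
      min (min (exp ε * π₀ n + δ) (1 - exp (-ε) * (1 - π₀ n - δ))) 1) :
    (∀ n : ℕ, 1 ≤ n → π₀ n ≠ 1 → exp (-ε) * δ ≤ π₀ n - π₀ (n - 1)) ∧
    ∃ N : ℕ, ∀ n ≥ N, π₀ n = 1 := by
  have he0 : 0 < exp (-ε) := exp_pos _
  have he1 : exp (-ε) ≤ 1 := exp_le_one_iff.2 (by linarith)
  have hE1 : 1 ≤ exp ε := one_le_exp hε.le
  have hc : 0 < exp (-ε) * δ := by positivity
  have hle1 : ∀ n, π₀ n ≤ 1 := by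
    intro n
    cases n with
    | zero => rw [h0]; norm_num
    | succ m => rw [hrec]; exact min_le_right _ _
  have hnn : ∀ n, 0 ≤ π₀ n := by
    intro n
    induction n with
    | zero => rw [h0]
    | succ m ih =>
      rw [hrec]
      refine le_min (le_min (by nlinarith) ?_) (by norm_num)
      nlinarith [mul_nonneg he0.le ih, mul_nonneg he0.le hδ.le]
  have hstep : ∀ n, π₀ (n + 1) ≠ 1 → π₀ n + exp (-ε) * δ ≤ π₀ (n + 1) := by
    intro n hne
    rw [hrec] at hne ⊢
    have hlt : min (exp ε * π₀ n + δ) (1 - exp (-ε) * (1 - π₀ n - δ)) < 1 := by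
      rcases lt_or_ge (min (exp ε * π₀ n + δ) (1 - exp (-ε) * (1 - π₀ n - δ))) 1 with h | h
      · exact h
      · exact absurd (min_eq_right h) hne
    rw [min_eq_left hlt.le]
    refine le_min ?_ ?_
    · nlinarith [hnn n, mul_nonneg he0.le hδ.le]
    · nlinarith [mul_nonneg (sub_nonneg.2 (hle1 n)) (sub_nonneg.2 he1)]
  have hstay : ∀ n, π₀ n = 1 → π₀ (n + 1) = 1 := by
    intro n h1
    rw [hrec, h1]
    refine min_eq_right (le_min (by nlinarith) (by nlinarith))
  constructor
  · intro n hn hne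
    obtain ⟨m, rfl⟩ := Nat.exists_eq_add_of_le hn
    simp only [Nat.add_sub_cancel_left] at *
    have := hstep m (by simpa [Nat.add_comm] using hne)
    simp only [Nat.add_comm 1 m] at *
    linarith
  · have claim : ∀ n : ℕ, π₀ n = 1 ∨ (n : ℝ) * (exp (-ε) * δ) ≤ π₀ n := by
      intro n
      induction n with
      | zero => right; rw [h0]; norm_num
      | succ m ih =>
        rcases ih with h1 | hge
        · left; exact hstay m h1
        · by_cases hne : π₀ (m + 1) = 1
          · left; exact hne
          · right
            have := hstep m hne
            push_cast
            linarith
    obtain ⟨N, hN⟩ := exists_nat_gt (1 / (exp (-ε) * δ))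
    refine ⟨N, fun n hn => ?_⟩
    rcases claim n with h1 | hge
    · exact h1
    · exfalso
      have h1 : 1 / (exp (-ε) * δ) < (n : ℝ) := lt_of_lt_of_le hN (by exact_mod_cast hn)
      have : 1 < (n : ℝ) * (exp (-ε) * δ) := by
        rw [div_lt_iff₀ hc] at h1; linarith
      linarith [hle1 n]
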